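/- Let ψ ∈ T_n with finite ω_i = ∂ψ/∂s_i|_{s=0⁻}, and A commuting generators as usual. Then for x in the common domain, φ_i(A₁,…,A_n,A_i)x = (∂ψ(A)/∂s_i) x − ω_i x, where φ_i ∈ T_{n+1} is the divided difference and ∂ψ(A)/∂s_i = ∫ T_A(v) v_i dμ(v). -/

import Mathlib

open MeasureTheory Filter Set

variable {X : Type*} [NormedAddCommGroup X] [NormedSpace ℂ X] [CompleteSpace X]

/-- A (not necessarily bounded) one-parameter `C₀`-semigroup on `X`. -/
def IsC0 (T : ℝ → X →L[ℂ] X) : Prop :=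
  T 0 = 1 ∧ (∀ s t : ℝ, 0 ≤ s → 0 ≤ t → T (s + t) = T s ∘L T t) ∧
    ∀ x : X, ContinuousOn (fun t => T t x) (Set.Ici 0)

/-- `A` (a partially defined linear map) is the infinitesimal generator of the
semigroup `T`: its domain is exactly the set of `x` for which the difference
quotient converges, and on the domain `A x` is its limit. -/
def IsGen (T : ℝ → X →L[ℂ] X) (A : X →ₗ.[ℂ] X) : Prop :=
  (∀ x : X, x ∈ A.domain ↔
      ∃ y : X, Tendsto (fun t : ℝ => (t : ℂ)⁻¹ • (T t x - x)) (nhdsWithin 0 (Set.Ioi 0)) (nhds y)) ∧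
    ∀ x : A.domain,
      Tendsto (fun t : ℝ => (t : ℂ)⁻¹ • (T t (x : X) - (x : X))) (nhdsWithin 0 (Set.Ioi 0)) (nhds (A x))

/-- The set `ℝ₊ⁿ \ {0}`. -/
def posSupp (n : ℕ) : Set (Fin n → ℝ) := {v | (∀ j, 0 ≤ v j) ∧ v ≠ 0}

/-- The `n`-parameter semigroup `T_A(v) = T_{A₁}(v₁)⋯T_{A_n}(v_n)`. -/
noncomputable def TProd {X : Type*} [NormedAddCommGroup X] [NormedSpace ℂ X]
    {n : ℕ} (T : Fin n → ℝ → X →L[ℂ] X) (v : Fin n → ℝ) : X →L[ℂ] X :=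
  ((List.finRange n).map (fun j => T j (v j))).prod


/-- The region `Ω_i = {(v,w) : v ∈ ℝ₊ⁿ\{0}, w ∈ [−v_i, v_i]}`. -/
def OmegaSet (n : ℕ) (i : Fin n) : Set ((Fin n → ℝ) × ℝ) :=
  {p | p.1 ∈ posSupp n ∧ p.2 ∈ Set.Icc (-(p.1 i)) (p.1 i)}

/-- The change of variables `u_j = v_j (j ≠ i, n+1)`, `u_i = (v_i + w)/2`,
`u_{n+1} = (v_i − w)/2`. -/
noncomputable def chg {n : ℕ} (i : Fin n) (p : (Fin n → ℝ) × ℝ) : Fin (n + 1) → ℝ :=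
  Fin.lastCases ((p.1 i - p.2) / 2)
    (fun k => if k = i then (p.1 i + p.2) / 2 else p.1 k)

/-- The measure `μ_i`: the image of `(1/2) dμ(v) dw` on `Ω_i` under `chg i`. -/
noncomputable def muI {n : ℕ} (μ : Measure (Fin n → ℝ)) (i : Fin n) :
    Measure (Fin (n + 1) → ℝ) :=
  Measure.map (chg i) ((2 : ENNReal)⁻¹ • (μ.prod volume).restrict (OmegaSet n i))



lemma aux_joint_cont (T : ℝ → X →L[ℂ] X)
    (hTc : ∀ x : X, ContinuousOn (fun t => T t x) (Set.Ici 0))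
    (M : ℝ) (hM : ∀ t : ℝ, 0 ≤ t → ‖T t‖ ≤ M) :
    ContinuousOn (fun q : ℝ × X => T q.1 q.2) (Set.Ici (0:ℝ) ×ˢ (univ : Set X)) := by
  rintro ⟨t, y⟩ ⟨ht, -⟩
  have hmt : MapsTo (Prod.fst : ℝ × X → ℝ) (Set.Ici (0:ℝ) ×ˢ (univ : Set X)) (Set.Ici (0:ℝ)) :=
    fun q hq => hq.1
  have h1 : ContinuousWithinAt (fun q : ℝ × X => T q.1 y)
      (Set.Ici (0:ℝ) ×ˢ (univ : Set X)) (t, y) :=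
    ContinuousWithinAt.comp (x := (t, y)) (g := fun s => T s y) (hTc y t ht) continuousWithinAt_fst hmt
  have h2 : Tendsto (fun q : ℝ × X => T q.1 (q.2 - y))
      (nhdsWithin (t, y) (Set.Ici (0:ℝ) ×ˢ (univ : Set X))) (nhds 0) := by
    refine squeeze_zero_norm' (a := fun q : ℝ × X => M * ‖q.2 - y‖) ?_ ?_
    · filter_upwards [self_mem_nhdsWithin] with q hq
      calc ‖T q.1 (q.2 - y)‖ ≤ ‖T q.1‖ * ‖q.2 - y‖ := (T q.1).le_opNorm _
        _ ≤ M * ‖q.2 - y‖ := by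
            have := hM q.1 hq.1
            exact mul_le_mul_of_nonneg_right this (norm_nonneg _)
    · have : Tendsto (fun q : ℝ × X => M * ‖q.2 - y‖) (nhds (t, y)) (nhds (M * ‖y - y‖)) :=
        (continuous_const.mul ((continuous_snd.sub continuous_const).norm)).tendsto _
      simp only [sub_self, norm_zero, mul_zero] at this
      exact this.mono_left nhdsWithin_le_nhds
  have h3 : ContinuousWithinAt (fun q : ℝ × X => T q.1 (q.2 - y) + T q.1 y)
      (Set.Ici (0:ℝ) ×ˢ (univ : Set X)) (t, y) := by
    have := h2.add h1
    simpa [ContinuousWithinAt] using this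
  refine h3.congr (fun q _ => ?_) (by simp)
  simp [map_sub]

lemma aux_prod_bound {n : ℕ} (T : Fin n → ℝ → X →L[ℂ] X) (M : ℝ) (hM0 : 0 ≤ M)
    (hM : ∀ j (t : ℝ), 0 ≤ t → ‖T j t‖ ≤ M) (v : Fin n → ℝ) (hv : ∀ j, 0 ≤ v j) (x : X) :
    ∀ l : List (Fin n), ‖((l.map fun j => T j (v j)).prod) x‖ ≤ M ^ l.length * ‖x‖ := by
  intro l
  induction l with
  | nil => simp
  | cons j l ih =>
    simp only [List.map_cons, List.prod_cons, List.length_cons, ContinuousLinearMap.mul_apply]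
    calc ‖T j (v j) (((l.map fun j => T j (v j)).prod) x)‖
        ≤ ‖T j (v j)‖ * ‖((l.map fun j => T j (v j)).prod) x‖ := (T j (v j)).le_opNorm _
      _ ≤ M * (M ^ l.length * ‖x‖) :=
          mul_le_mul (hM j (v j) (hv j)) ih (norm_nonneg _) hM0
      _ = M ^ (l.length + 1) * ‖x‖ := by ring

lemma aux_prod_cont {n : ℕ} (T : Fin n → ℝ → X →L[ℂ] X)
    (hTc : ∀ j, ∀ x : X, ContinuousOn (fun t => T j t x) (Set.Ici 0))
    (M : ℝ) (hM : ∀ j (t : ℝ), 0 ≤ t → ‖T j t‖ ≤ M) (x : X) :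
    ∀ l : List (Fin n), ContinuousOn (fun v : Fin n → ℝ => ((l.map fun j => T j (v j)).prod) x)
      {v : Fin n → ℝ | ∀ j, 0 ≤ v j} := by
  intro l
  induction l with
  | nil => simpa using continuousOn_const
  | cons j l ih =>
    simp only [List.map_cons, List.prod_cons, ContinuousLinearMap.mul_apply]
    have hj := aux_joint_cont (T j) (hTc j) M (hM j)
    exact hj.comp (((continuous_apply j).continuousOn).prodMk ih)
      (fun v hv => ⟨hv j, trivial⟩)

/-- `φ_i(A₁,…,A_n,A_i)x = (∂ψ(A)/∂s_i)x − ω_i x` on the common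
domain, where `φ_i(A₁,…,A_n,A_i)x` is given by its defining integral against `μ_i`
(with `T_i` evaluated at `u_i + u_{n+1}`) and `∂ψ(A)/∂s_i = ∫ T_A(v) v_i dμ(v)`. -/
theorem divided_difference_at_A_eq_partial
    {n : ℕ} (μ : Measure (Fin n → ℝ)) (hsupp : μ (posSupp n)ᶜ = 0)
    (i : Fin n) (hωfin : Integrable (fun v => v i) μ)
    (T : Fin n → ℝ → X →L[ℂ] X) (hT : ∀ j, IsC0 (T j))
    (M : ℝ) (hM : ∀ j (t : ℝ), 0 ≤ t → ‖T j t‖ ≤ M)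
    (hcomm : ∀ j k (s t : ℝ), T j s ∘L T k t = T k t ∘L T j s)
    (A : Fin n → X →ₗ.[ℂ] X) (hA : ∀ j, IsGen (T j) (A j))
    (x : X) (hx : ∀ j, x ∈ (A j).domain) :
    ∫ u : Fin (n + 1) → ℝ,
        (TProd (fun j : Fin n => fun r : ℝ => T j r)
          (fun j : Fin n =>
            if j = i then u j.castSucc + u (Fin.last n) else u j.castSucc) x - x)
        ∂(muI μ i)
      = (∫ v : Fin n → ℝ, ((v i : ℂ)) • (TProd T v x) ∂μ)
        - ((∫ v, v i ∂μ : ℝ) : ℂ) • x := by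
    classical
  set Sn : Set (Fin n → ℝ) := {v | ∀ j, 0 ≤ v j} with hSn
  set Sp : Set (Fin (n + 1) → ℝ) := {u | ∀ j, 0 ≤ u j} with hSp
  set σ : (Fin (n + 1) → ℝ) → (Fin n → ℝ) :=
    fun u j => if j = i then u j.castSucc + u (Fin.last n) else u j.castSucc with hσdef
  set g : (Fin n → ℝ) → X := fun v => TProd T v x - x with hgdef
  have hMnn : 0 ≤ M := le_trans (norm_nonneg (T i 0)) (hM i 0 le_rfl)
  have hTc : ∀ j, ∀ y : X, ContinuousOn (fun t => T j t y) (Set.Ici 0) := fun j => (hT j).2.2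
  -- measurability of the sets involved
  have hSnm : MeasurableSet Sn := by
    have : Sn = ⋂ j, {v : Fin n → ℝ | 0 ≤ v j} := by ext v; simp [hSn, Set.mem_iInter]
    rw [this]
    exact MeasurableSet.iInter fun j => measurableSet_le measurable_const (measurable_pi_apply j)
  have hSpm : MeasurableSet Sp := by
    have : Sp = ⋂ j, {u : Fin (n + 1) → ℝ | 0 ≤ u j} := by ext u; simp [hSp, Set.mem_iInter]
    rw [this]
    exact MeasurableSet.iInter fun j => measurableSet_le measurable_const (measurable_pi_apply j)
  have hposm : MeasurableSet (posSupp n) := by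
    have : posSupp n = Sn ∩ {(0 : Fin n → ℝ)}ᶜ := by
      ext v; simp [posSupp, hSn]
    rw [this]
    exact hSnm.inter (measurableSet_singleton 0).compl
  have hΩm : MeasurableSet (OmegaSet n i) := by
    have : OmegaSet n i = (Prod.fst ⁻¹' posSupp n) ∩
        ({p : (Fin n → ℝ) × ℝ | -(p.1 i) ≤ p.2} ∩ {p : (Fin n → ℝ) × ℝ | p.2 ≤ p.1 i}) := by
      ext p; simp [OmegaSet, Set.mem_Icc, and_assoc]
    rw [this]
    exact (measurable_fst hposm).inter
      ((measurableSet_le ((measurable_pi_apply i).comp measurable_fst).neg measurable_snd).inter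
        (measurableSet_le measurable_snd ((measurable_pi_apply i).comp measurable_fst)))
  -- measurability of chg
  have hchgm : Measurable (chg i) := by
    apply Continuous.measurable
    apply continuous_pi
    intro a
    refine Fin.lastCases ?_ ?_ a
    · simp only [chg, Fin.lastCases_last]
      exact ((continuous_apply i).comp continuous_fst).sub continuous_snd |>.div_const 2
    · intro k
      simp only [chg, Fin.lastCases_castSucc]
      by_cases hk : k = i
      · simp only [hk, if_pos rfl]
        exact (((continuous_apply i).comp continuous_fst).add continuous_snd).div_const 2
      · simp only [if_neg hk]
        exact (continuous_apply k).comp continuous_fst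
  -- the change of variables undoes σ
  have hchg1 : ∀ p : (Fin n → ℝ) × ℝ, chg i p (Fin.castSucc i) = (p.1 i + p.2) / 2 := by
    intro p; simp [chg]
  have hchg2 : ∀ p : (Fin n → ℝ) × ℝ, chg i p (Fin.last n) = (p.1 i - p.2) / 2 := by
    intro p; simp [chg]
  have hchg3 : ∀ (p : (Fin n → ℝ) × ℝ) (k : Fin n), k ≠ i → chg i p (Fin.castSucc k) = p.1 k := by
    intro p k hk; simp [chg, hk]
  have hchain : ∀ p : (Fin n → ℝ) × ℝ, σ (chg i p) = p.1 := by
    intro p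
    funext j
    by_cases hj : j = i
    · subst hj
      simp only [hσdef, if_pos rfl, hchg1, hchg2]
      ring
    · simp only [hσdef, if_neg hj, hchg3 p j hj]
  -- chg maps Ω into the nonnegative orthant
  have hmaps : ∀ p ∈ OmegaSet n i, chg i p ∈ Sp := by
    rintro p ⟨⟨hp1, -⟩, hw⟩
    rw [Set.mem_Icc] at hw
    intro a
    refine Fin.lastCases ?_ ?_ a
    · rw [hchg2]
      linarith [hw.2]
    · intro k
      by_cases hk : k = i
      · subst hk
        rw [hchg1]
        linarith [hw.1]
      · rw [hchg3 p k hk]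
        exact hp1 k
  have hSp0 : muI μ i Spᶜ = 0 := by
    unfold muI
    rw [Measure.map_apply hchgm hSpm.compl, Measure.smul_apply,
      Measure.restrict_apply (hchgm hSpm.compl)]
    have hempty : chg i ⁻¹' Spᶜ ∩ OmegaSet n i = ∅ := by
      rw [Set.eq_empty_iff_forall_notMem]
      rintro p ⟨hpc, hpΩ⟩
      exact hpc (hmaps p hpΩ)
    rw [Set.preimage_compl] at hempty
    simp [hempty]
  have hμae : ∀ᵐ v ∂μ, v ∈ posSupp n := by
    rw [ae_iff]
    exact hsupp
  have hμres : μ.restrict (posSupp n) = μ := Measure.restrict_eq_self_of_ae_mem hμae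
  -- continuity and bounds for the integrands
  have hgTc : ContinuousOn (fun v => TProd T v x) Sn :=
    aux_prod_cont T hTc M hM x (List.finRange n)
  have hgc : ContinuousOn g Sn := hgTc.sub continuousOn_const
  have hbound : ∀ v ∈ Sn, ‖TProd T v x‖ ≤ M ^ n * ‖x‖ := fun v hv => by
    simpa [TProd] using aux_prod_bound T M hMnn hM v hv x (List.finRange n)
  have hposSn : posSupp n ⊆ Sn := fun v hv => hv.1
  -- σ is continuous and maps Sp into Sn
  have hσc : Continuous σ := by
    apply continuous_pi
    intro j
    by_cases hj : j = i
    · simp only [hσdef, if_pos hj]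
      exact (continuous_apply _).add (continuous_apply _)
    · simp only [hσdef, if_neg hj]
      exact continuous_apply _
  have hσmaps : ∀ u ∈ Sp, σ u ∈ Sn := by
    intro u hu j
    by_cases hj : j = i
    · simp only [hσdef, if_pos hj]
      exact add_nonneg (hu _) (hu _)
    · simp only [hσdef, if_neg hj]
      exact hu _
  -- a.e. strong measurability of the left integrand
  have hFres : (muI μ i).restrict Sp = muI μ i :=
    Measure.restrict_eq_self_of_ae_mem (by rw [ae_iff]; exact hSp0)
  have hFc : ContinuousOn (fun u => g (σ u)) Sp := hgc.comp hσc.continuousOn hσmaps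
  have hFm : AEStronglyMeasurable (fun u => g (σ u)) (muI μ i) := by
    rw [← hFres]
    exact hFc.aestronglyMeasurable hSpm
  -- Step 1: unfold the pushforward
  set m : Measure ((Fin n → ℝ) × ℝ) := (μ.prod volume).restrict (OmegaSet n i) with hm
  have step1 : ∫ u, g (σ u) ∂(muI μ i)
      = ∫ p, g (σ (chg i p)) ∂((2 : ENNReal)⁻¹ • m) := by
    unfold muI at hFm ⊢
    exact integral_map hchgm.aemeasurable hFm
  have step1' : (∫ p, g (σ (chg i p)) ∂((2 : ENNReal)⁻¹ • m))
      = (2 : ℝ)⁻¹ • ∫ p, g p.1 ∂m := by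
    simp_rw [hchain]
    rw [integral_smul_measure]
    norm_num
  -- Step 2: push forward along `Prod.fst`; the fibers of Ω have length `2 v i`
  set ρ : (Fin n → ℝ) → ENNReal := fun v => volume (Prod.mk v ⁻¹' OmegaSet n i) with hρdef
  have hslice : ∀ v ∈ posSupp n, Prod.mk v ⁻¹' OmegaSet n i = Set.Icc (-(v i)) (v i) := by
    intro v hv; ext w; simp [OmegaSet, hv]
  have hslice' : ∀ v ∉ posSupp n, Prod.mk v ⁻¹' OmegaSet n i = ∅ := by
    intro v hv; ext w; simp [OmegaSet, hv]
  have hρae : ρ =ᵐ[μ] fun v => ENNReal.ofReal (2 * v i) := by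
    filter_upwards [hμae] with v hv
    rw [hρdef]
    show volume (Prod.mk v ⁻¹' OmegaSet n i) = ENNReal.ofReal (2 * v i)
    rw [hslice v hv, Real.volume_Icc]
    congr 1
    ring
  have hmapfst : Measure.map Prod.fst m = μ.withDensity ρ := by
    ext A hA
    rw [Measure.map_apply measurable_fst hA, hm, Measure.restrict_apply (measurable_fst hA),
      Measure.prod_apply ((measurable_fst hA).inter hΩm), withDensity_apply _ hA,
      ← lintegral_indicator hA]
    apply lintegral_congr
    intro v
    by_cases hvA : v ∈ A
    · rw [Set.indicator_of_mem hvA]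
      congr 1
      ext w
      simp [hvA]
    · rw [Set.indicator_of_notMem hvA]
      have : Prod.mk v ⁻¹' (Prod.fst ⁻¹' A ∩ OmegaSet n i) = ∅ := by
        ext w; simp [hvA]
      simp [this]
  have hTm : AEStronglyMeasurable (fun v => TProd T v x) μ := by
    rw [← hμres]
    exact (hgTc.mono hposSn).aestronglyMeasurable hposm
  have hgm : AEStronglyMeasurable g μ := hTm.sub aestronglyMeasurable_const
  have hwd : μ.withDensity ρ = μ.withDensity (fun v => ((2 * v i).toNNReal : ENNReal)) := by
    apply withDensity_congr_ae
    exact hρae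
  have hgmm : AEStronglyMeasurable g (Measure.map Prod.fst m) := by
    rw [hmapfst, hwd]
    exact hgm.mono_ac (withDensity_absolutelyContinuous μ _)
  have stepA : ∫ p, g p.1 ∂m = ∫ v, g v ∂(Measure.map Prod.fst m) :=
    (integral_map measurable_fst.aemeasurable hgmm).symm
  have stepB : ∫ v, g v ∂(Measure.map Prod.fst m) = ∫ v, (2 * v i).toNNReal • g v ∂μ := by
    rw [hmapfst, hwd]
    exact integral_withDensity_eq_integral_smul
      ((measurable_const.mul (measurable_pi_apply i)).real_toNNReal) g
  have stepC : ∫ v, (2 * v i).toNNReal • g v ∂μ = ∫ v, (2 * v i) • g v ∂μ := by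
    apply integral_congr_ae
    filter_upwards [hμae] with v hv
    have h2vi : 0 ≤ 2 * v i := by have := hv.1 i; linarith
    rw [NNReal.smul_def, Real.coe_toNNReal _ h2vi]
  -- integrability for the right-hand side
  have h1 : Integrable (fun v => (v i) • TProd T v x) μ := by
    apply Integrable.mono' ((hωfin.abs).const_mul (M ^ n * ‖x‖))
      ((hωfin.aestronglyMeasurable).smul hTm)
    filter_upwards [hμae] with v hv
    show ‖v i • TProd T v x‖ ≤ _
    rw [norm_smul, Real.norm_eq_abs]
    calc |v i| * ‖TProd T v x‖ ≤ |v i| * (M ^ n * ‖x‖) :=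
          mul_le_mul_of_nonneg_left (hbound v (hposSn hv)) (abs_nonneg _)
      _ = M ^ n * ‖x‖ * |v i| := by ring
  have h2 : Integrable (fun v => (v i) • x) μ := hωfin.smul_const x
  -- put everything together
  calc ∫ u, (TProd (fun j : Fin n => fun r : ℝ => T j r)
          (fun j : Fin n =>
            if j = i then u j.castSucc + u (Fin.last n) else u j.castSucc) x - x) ∂(muI μ i)
      = ∫ u, g (σ u) ∂(muI μ i) := rfl
    _ = (2 : ℝ)⁻¹ • ∫ p, g p.1 ∂m := by rw [step1, step1']
    _ = (2 : ℝ)⁻¹ • ∫ v, (2 * v i) • g v ∂μ := by rw [stepA, stepB, stepC]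
    _ = ∫ v, (v i) • g v ∂μ := by
        rw [← integral_smul]
        apply integral_congr_ae
        apply ae_of_all
        intro v
        show (2 : ℝ)⁻¹ • (2 * v i) • g v = (v i) • g v
        rw [smul_smul]
        congr 1
        ring
    _ = (∫ v, (v i) • TProd T v x ∂μ) - ∫ v, (v i) • x ∂μ := by
        simp_rw [hgdef, smul_sub]
        exact integral_sub h1 h2
    _ = (∫ v : Fin n → ℝ, ((v i : ℂ)) • (TProd T v x) ∂μ) - ((∫ v, v i ∂μ : ℝ) : ℂ) • x := by
        have e : (fun v : Fin n → ℝ => (v i) • TProd T v x)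
            = fun v : Fin n → ℝ => ((v i : ℂ)) • TProd T v x := by
          funext v
          rw [Complex.coe_smul]
        rw [e, integral_smul_const, Complex.coe_smul]
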